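/- Let μ ∈ ℂ, let (φ₋₁, φ₁) be a Casimir representation of semi-level μ on V = ℂ[z]^n, let V' = ℂ[z]^k carry an sl(2)-module structure given by φ'₋₁ ∈ End₋₁(V'), φ'₁ ∈ End₁(V') with φ'₋₁∘φ'₁ − φ'₁∘φ'₋₁ = multiplication by −2z, and let ψ : V' → V be an injective ℂ[z]-linear map with ψ∘φ'₁ = φ₁∘ψ and ψ∘φ'₋₁ = φ₋₁∘ψ. If φ₁ is bijective (i.e. V has Smith type S₀(n,0) = (1,…,1)), then: φ'₁ is bijective (V' has Smith type S₀(k,0)); the quotient Q := V/ψ(V') is a free ℂ[z]-module of rank n−k; the induced maps φ̄₋₁, φ̄₁ on Q form a Casimir representation of semi-level μ; and φ̄₁ is bijective (Q has Smith type S₀(n−k,0)). -/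

import Mathlib

open Polynomial

/-- The shift automorphism `∇ : ℂ[z] → ℂ[z]`, `p(z) ↦ p(z+1)`. -/
noncomputable def nabla : Polynomial ℂ ≃ₐ[ℂ] Polynomial ℂ := algEquivAevalXAddC 1

/-- `End_k(V)`: additive endomorphisms with `φ(p • v) = (∇^k p) • φ(v)`. -/
def IsSemilinearEnd {M : Type*} [AddCommMonoid M] [Module (Polynomial ℂ) M]
    (k : ℤ) (φ : M → M) : Prop :=
  (∀ v w : M, φ (v + w) = φ v + φ w) ∧
  ∀ (p : Polynomial ℂ) (v : M), φ (p • v) = ((nabla ^ k) p) • φ v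

/-- `π_μ(z) = (z+μ)(z-μ-1)`. -/
noncomputable def piMu (μ : ℂ) : Polynomial ℂ := (X + C μ) * (X - C μ - 1)

/-- A Casimir representation of semi-level `μ` on a `ℂ[z]`-module `M`:
a pair `(φ₋₁, φ₁)` of semilinear endomorphisms of degrees `-1` and `1` with
`φ₋₁ ∘ φ₁ = π_μ(z)·` and `φ₁ ∘ φ₋₁ = π_μ(z+1)·`. -/
def IsCasimirRep {M : Type*} [AddCommMonoid M] [Module (Polynomial ℂ) M]
    (μ : ℂ) (φm φp : M → M) : Prop :=
  IsSemilinearEnd (-1) φm ∧ IsSemilinearEnd 1 φp ∧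
  (∀ v, φm (φp v) = piMu μ • v) ∧
  (∀ v, φp (φm v) = (nabla (piMu μ)) • v)

lemma nabla_eq_comp (p : Polynomial ℂ) : nabla p = p.comp (X + C 1) := by
  simp [nabla, algEquivAevalXAddC, algEquivOfCompEqX, aeval_def, Polynomial.comp,
    Polynomial.algebraMap_eq]

lemma nabla_natDegree (p : Polynomial ℂ) : (nabla p).natDegree = p.natDegree := by
  rw [nabla_eq_comp, natDegree_comp, natDegree_X_add_C, mul_one]

lemma nabla_leadingCoeff (p : Polynomial ℂ) : (nabla p).leadingCoeff = p.leadingCoeff := by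
  rw [nabla_eq_comp, leadingCoeff_comp (by rw [natDegree_X_add_C]; exact one_ne_zero)]
  have h1 : (X + C (1:ℂ)).leadingCoeff = 1 := monic_X_add_C 1
  simp at h1 ⊢
  simp [h1]

lemma nabla_eval (p : Polynomial ℂ) (x : ℂ) : (nabla p).eval x = p.eval (x + 1) := by
  rw [nabla_eq_comp, eval_comp]; simp

lemma nabla_ne_zero {p : Polynomial ℂ} (hp : p ≠ 0) : nabla p ≠ 0 := by
  intro hc
  exact hp (by simpa using (EmbeddingLike.map_eq_zero_iff (f := nabla)).mp hc)

/-- A polynomial fixed by the shift is constant. -/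
lemma natDegree_eq_zero_of_nabla_fixed {p : Polynomial ℂ} (hfix : nabla p = p) :
    p.natDegree = 0 := by
  have hn : ∀ m : ℕ, p.eval (m : ℂ) = p.eval 0 := by
    intro m
    induction m with
    | zero => simp
    | succ j ih =>
      have := nabla_eval p (j : ℂ)
      rw [hfix] at this
      push_cast
      rw [← this, ih]
  have hz : p - C (p.eval 0) = 0 := by
    apply Polynomial.eq_zero_of_infinite_isRoot
    apply Set.infinite_of_injective_forall_mem (f := fun m : ℕ => (m : ℂ))
    · exact fun a b hab => Nat.cast_injective hab
    · intro m
      simp [IsRoot, hn m]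
  have : p = C (p.eval 0) := by linear_combination hz
  rw [this, natDegree_C]

section Aux
variable {R : Type*} [CommRing R] {M : Type*} [AddCommGroup M] [Module R M]

/-- iterates of an additive σ-semilinear map. -/
lemma aux_iter_add (f : M → M) (hadd : ∀ a b : M, f (a + b) = f a + f b)
    (i : ℕ) (a b : M) : f^[i] (a + b) = f^[i] a + f^[i] b := by
  induction i generalizing a b with
  | zero => simp
  | succ j ih => rw [Function.iterate_succ_apply, hadd, ih,
      Function.iterate_succ_apply, Function.iterate_succ_apply]

lemma aux_map_zero (f : M → M) (hadd : ∀ a b : M, f (a + b) = f a + f b) : f 0 = 0 := by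
  have := hadd 0 0
  rw [add_zero] at this
  exact (left_eq_add.mp this)

lemma aux_iter_smul (f : M → M) (σ : R → R)
    (hsmul : ∀ (p : R) (v : M), f (p • v) = σ p • f v)
    (i : ℕ) (p : R) (v : M) : f^[i] (p • v) = σ^[i] p • f^[i] v := by
  induction i generalizing p v with
  | zero => simp
  | succ j ih =>
      rw [Function.iterate_succ_apply, hsmul, ih, Function.iterate_succ_apply,
        Function.iterate_succ_apply]

/-- A surjective additive semilinear endomorphism of a Noetherian module is injective. -/
lemma aux_injective_of_surjective [IsNoetherian R M] (f : M → M) (σ : R → R)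
    (hadd : ∀ a b : M, f (a + b) = f a + f b)
    (hsmul : ∀ (p : R) (v : M), f (p • v) = σ p • f v)
    (hsurj : Function.Surjective f) : Function.Injective f := by
  have hz : f 0 = 0 := aux_map_zero f hadd
  have hzi : ∀ i, f^[i] (0 : M) = 0 := by
    intro i; induction i with
    | zero => rfl
    | succ j ih => rw [Function.iterate_succ_apply', ih, hz]
  let K : ℕ →o Submodule R M :=
    ⟨fun i => { carrier := {x | f^[i] x = 0}
                add_mem' := by intro a b ha hb; simp only [Set.mem_setOf_eq] at *
                               rw [aux_iter_add f hadd, ha, hb, add_zero]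
                zero_mem' := hzi i
                smul_mem' := by intro c x hx; simp only [Set.mem_setOf_eq] at *
                                rw [aux_iter_smul f σ hsmul, hx, smul_zero] },
     by intro i j hij
        induction j with
        | zero => intro x hx; interval_cases i; exact hx
        | succ m ih =>
          rcases Nat.lt_or_ge i (m+1) with hlt | hge
          · intro x hx
            have hx' := ih (Nat.lt_succ_iff.mp hlt) hx
            show f^[m+1] x = 0
            rw [Function.iterate_succ_apply', hx', hz]
          · have : i = m + 1 := le_antisymm hij hge
            subst this; exact le_rfl⟩
  obtain ⟨N, hN⟩ := monotone_stabilizes_iff_noetherian.mpr inferInstance K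
  -- injectivity
  have hker : ∀ x, f x = 0 → x = 0 := by
    intro x hx
    obtain ⟨y, hy⟩ := Function.Surjective.iterate hsurj N x
    have hyK : y ∈ K (N + 1) := by
      show f^[N+1] y = 0
      rw [Function.iterate_succ_apply', hy, hx]
    rw [← hN (N+1) (Nat.le_succ N)] at hyK
    rw [← hy]; exact hyK
  intro a b hab
  have : f (a - b) = 0 := by
    have h1 : f (a - b) + f b = f a := by rw [← hadd, sub_add_cancel]
    rw [hab] at h1
    exact add_right_cancel (h1.trans (zero_add (f b)).symm)
  exact sub_eq_zero.mp (hker _ this)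

end Aux

section Tor
variable {M : Type*} [AddCommGroup M] [Module (Polynomial ℂ) M]

local notation "P" => Polynomial ℂ

/-- If `f` is a bijective `∇`-semilinear additive endomorphism of a Noetherian
`ℂ[z]`-module, the module is torsion-free. -/
lemma aux_torsion_free [IsNoetherian P M] (f : M → M)
    (hadd : ∀ a b : M, f (a + b) = f a + f b)
    (hsmul : ∀ (p : P) (v : M), f (p • v) = nabla p • f v)
    (hbij : Function.Bijective f) :
    ∀ (p : P) (v : M), p • v = 0 → p = 0 ∨ v = 0 := by
  classical
  set T := Submodule.torsion P M with hT
  have hz : f 0 = 0 := aux_map_zero f hadd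
  -- membership criterion
  have hmem : ∀ x : M, x ∈ T ↔ ∃ a : P, a ≠ 0 ∧ a • x = 0 := by
    intro x
    rw [hT, Submodule.mem_torsion_iff]
    constructor
    · rintro ⟨a, ha⟩
      exact ⟨(a : P), nonZeroDivisors.coe_ne_zero a, ha⟩
    · rintro ⟨a, ha0, ha⟩
      exact ⟨⟨a, mem_nonZeroDivisors_of_ne_zero ha0⟩, ha⟩
  -- f maps torsion bijectively onto torsion, giving ∇-stability of annihilators
  have hstep : ∀ p : P, (∀ t ∈ T, p • t = 0) → ∀ t ∈ T, nabla p • t = 0 := by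
    intro p hp t ht
    obtain ⟨s, hs⟩ := hbij.2 t
    have hsT : s ∈ T := by
      obtain ⟨q, hq0, hq⟩ := (hmem t).mp ht
      have : f ((nabla.symm q) • s) = 0 := by
        rw [hsmul, AlgEquiv.apply_symm_apply, hs, hq]
      have h0 : (nabla.symm q) • s = 0 := hbij.1 (by rw [this, hz])
      refine (hmem s).mpr ⟨nabla.symm q, ?_, h0⟩
      intro hc
      exact hq0 (by simpa using congrArg nabla hc)
    have : f (p • s) = nabla p • t := by rw [hsmul, hs]
    rw [hp s hsT, hz] at this
    exact this.symm
  -- a nonzero annihilator of T exists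
  have hexann : ∃ p : P, p ≠ 0 ∧ ∀ t ∈ T, p • t = 0 := by
    obtain ⟨S, hS⟩ := (IsNoetherian.noetherian T : T.FG)
    have hex : ∀ s : M, s ∈ T → ∃ a : P, a ≠ 0 ∧ a • s = 0 := fun s hs => (hmem s).mp hs
    let c : M → P := fun s => if h : s ∈ T then (hex s h).choose else 1
    have hc0 : ∀ s : M, c s ≠ 0 := by
      intro s
      by_cases h : s ∈ T
      · simp only [c, dif_pos h]; exact (hex s h).choose_spec.1
      · simp [c, dif_neg h]
    have hcs : ∀ s : M, s ∈ T → c s • s = 0 := by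
      intro s h
      simp only [c, dif_pos h]; exact (hex s h).choose_spec.2
    refine ⟨∏ s ∈ S, c s, Finset.prod_ne_zero_iff.mpr (fun s _ => hc0 s), ?_⟩
    intro t ht
    have hle : (T : Submodule P M) ≤ LinearMap.ker (LinearMap.lsmul P M (∏ s ∈ S, c s)) := by
      rw [← hS, Submodule.span_le]
      intro s hsS
      have hsT : s ∈ T := hS ▸ Submodule.subset_span hsS
      simp only [SetLike.mem_coe, LinearMap.mem_ker, LinearMap.lsmul_apply]
      rw [← Finset.prod_erase_mul S c hsS, mul_smul, hcs s hsT, smul_zero]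
    have := hle ht
    simpa using this
  -- strong induction on the degree of an annihilator
  have hmain : ∀ d : ℕ, ∀ p : P, p ≠ 0 → p.natDegree ≤ d → (∀ t ∈ T, p • t = 0) →
      ∀ t ∈ T, t = 0 := by
    intro d
    induction d with
    | zero =>
      intro p hp0 hdeg hann t ht
      obtain ⟨a, ha⟩ := Polynomial.natDegree_eq_zero.mp (Nat.le_zero.mp hdeg)
      have ha0 : a ≠ 0 := by rintro rfl; rw [map_zero] at ha; exact hp0 ha.symm
      have h1 : (C a⁻¹ * C a) • t = 0 := by
        rw [mul_smul, ha, hann t ht, smul_zero]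
      rwa [← C_mul, inv_mul_cancel₀ ha0, C_1, one_smul] at h1
    | succ m ih =>
      intro p hp0 hdeg hann t ht
      by_cases hle : p.natDegree ≤ m
      · exact ih p hp0 hle hann t ht
      by_cases hfix : nabla p = p
      · have := natDegree_eq_zero_of_nabla_fixed hfix; omega
      set q := nabla p - p with hq
      have hq0 : q ≠ 0 := sub_ne_zero.mpr hfix
      have hqann : ∀ t ∈ T, q • t = 0 := by
        intro t ht
        rw [hq, sub_smul, hstep p hann t ht, hann t ht, sub_zero]
      have hdeq : (nabla p).degree = p.degree := by
        rw [Polynomial.degree_eq_natDegree (nabla_ne_zero hp0), Polynomial.degree_eq_natDegree hp0,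
          nabla_natDegree]
      have hdlt : q.degree < p.degree := by
        have := Polynomial.degree_sub_lt hdeq (nabla_ne_zero hp0) (nabla_leadingCoeff p)
        rwa [hdeq] at this
      have hnlt : q.natDegree < p.natDegree := Polynomial.natDegree_lt_natDegree hq0 hdlt
      exact ih q hq0 (by omega) hqann t ht
  obtain ⟨p, hp0, hann⟩ := hexann
  intro q v hqv
  rcases eq_or_ne q 0 with h | h
  · exact Or.inl h
  · exact Or.inr (hmain p.natDegree p hp0 le_rfl hann v ((hmem v).mpr ⟨q, h, hqv⟩))

end Tor

/-- let `(φ₋₁, φ₁)` be a Casimir representation of semi-level `μ` on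
`V = ℂ[z]^n`, `(φ'₋₁, φ'₁)` an `sl(2)`-module structure on `V' = ℂ[z]^k` and
`ψ : V' → V` an injective morphism of `sl(2)`-modules. If `φ₁` is bijective (Smith type
`S₀(n,0)`), then `φ'₁` is bijective (Smith type `S₀(k,0)`), the quotient `Q = V/ψ(V')` is a
free `ℂ[z]`-module of rank `n−k`, and the induced maps on `Q` form a Casimir representation
of semi-level `μ` whose `φ̄₁` is bijective (Smith type `S₀(n−k,0)`). -/
theorem stmt_18 (μ : ℂ) (n k : ℕ)
    (φm φp : (Fin n → Polynomial ℂ) → (Fin n → Polynomial ℂ))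
    (h : IsCasimirRep μ φm φp)
    (φm' φp' : (Fin k → Polynomial ℂ) → (Fin k → Polynomial ℂ))
    (hm' : IsSemilinearEnd (-1) φm') (hp' : IsSemilinearEnd 1 φp')
    (hcomm' : ∀ v : Fin k → Polynomial ℂ,
      φm' (φp' v) - φp' (φm' v) = ((-2 : Polynomial ℂ) * X) • v)
    (ψ : (Fin k → Polynomial ℂ) →ₗ[Polynomial ℂ] (Fin n → Polynomial ℂ))
    (hinj : Function.Injective ψ)
    (hintp : ∀ v, ψ (φp' v) = φp (ψ v))
    (hintm : ∀ v, ψ (φm' v) = φm (ψ v))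
    (hbij : Function.Bijective φp) :
    Function.Bijective φp' ∧
    (∃ b : Fin (n - k) → (Fin n → Polynomial ℂ) ⧸ LinearMap.range ψ,
      ∀ v : (Fin n → Polynomial ℂ) ⧸ LinearMap.range ψ,
        ∃! c : Fin (n - k) → Polynomial ℂ, v = ∑ i, c i • b i) ∧
    (∃ ψm ψp : ((Fin n → Polynomial ℂ) ⧸ LinearMap.range ψ) →
        ((Fin n → Polynomial ℂ) ⧸ LinearMap.range ψ),
      (∀ v : Fin n → Polynomial ℂ,
        ψm (Submodule.Quotient.mk v) = Submodule.Quotient.mk (φm v)) ∧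
      (∀ v : Fin n → Polynomial ℂ,
        ψp (Submodule.Quotient.mk v) = Submodule.Quotient.mk (φp v)) ∧
      IsCasimirRep μ ψm ψp ∧ Function.Bijective ψp) := by
  classical
  obtain ⟨hm, hp, hmp, hpm⟩ := h
  set W : Submodule (Polynomial ℂ) (Fin n → Polynomial ℂ) := LinearMap.range ψ with hWdef
  set σp : Polynomial ℂ →+* Polynomial ℂ := ((nabla ^ (1:ℤ)).toAlgHom.toRingHom) with hσp
  set σm : Polynomial ℂ →+* Polynomial ℂ := ((nabla ^ (-1:ℤ)).toAlgHom.toRingHom) with hσm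
  let φpl : (Fin n → Polynomial ℂ) →ₛₗ[σp] (Fin n → Polynomial ℂ) :=
    { toFun := φp, map_add' := hp.1, map_smul' := hp.2 }
  let φml : (Fin n → Polynomial ℂ) →ₛₗ[σm] (Fin n → Polynomial ℂ) :=
    { toFun := φm, map_add' := hm.1, map_smul' := hm.2 }
  have hWp : ∀ x ∈ W, φp x ∈ W := by rintro x ⟨u, rfl⟩; exact ⟨φp' u, hintp u⟩
  have hWm : ∀ x ∈ W, φm x ∈ W := by rintro x ⟨u, rfl⟩; exact ⟨φm' u, hintm u⟩
  let fQ := Submodule.mapQ W W φpl (fun x hx => hWp x hx)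
  let gQ := Submodule.mapQ W W φml (fun x hx => hWm x hx)
  have hfQ : ∀ v, fQ (Submodule.Quotient.mk v) = Submodule.Quotient.mk (φp v) := fun _ => rfl
  have hgQ : ∀ v, gQ (Submodule.Quotient.mk v) = Submodule.Quotient.mk (φm v) := fun _ => rfl
  have hmk := Submodule.Quotient.mk_surjective W
  have hfQsurj : Function.Surjective fQ := by
    intro q
    obtain ⟨v, rfl⟩ := hmk q
    obtain ⟨w, rfl⟩ := hbij.2 v
    exact ⟨Submodule.Quotient.mk w, hfQ w⟩
  have hfQadd : ∀ a b, fQ (a + b) = fQ a + fQ b := fun a b => map_add fQ a b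
  have hfQsm : ∀ (p : Polynomial ℂ) q, fQ (p • q) = ((nabla ^ (1:ℤ)) p) • fQ q :=
    fun p q => by rw [LinearMap.map_smulₛₗ]; rfl
  have hfQinj : Function.Injective fQ :=
    aux_injective_of_surjective (⇑fQ) (fun p => (nabla ^ (1:ℤ)) p) hfQadd hfQsm hfQsurj
  -- φp' bijective
  have hp'inj : Function.Injective φp' := by
    intro a b hab
    exact hinj (hbij.1 (by rw [← hintp, ← hintp, hab]))
  have hp'surj : Function.Surjective φp' := by
    intro w
    obtain ⟨v, hv⟩ := hbij.2 (ψ w)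
    have h0 : fQ (Submodule.Quotient.mk v) = 0 := by
      rw [hfQ, hv]
      exact (Submodule.Quotient.mk_eq_zero W).mpr ⟨w, rfl⟩
    have hv0 : (Submodule.Quotient.mk v : _ ⧸ W) = 0 := hfQinj (by rw [h0, map_zero])
    obtain ⟨u, hu⟩ := (Submodule.Quotient.mk_eq_zero W).mp hv0
    refine ⟨u, hinj ?_⟩
    rw [hintp, hu, hv]
  -- torsion-freeness and freeness of the quotient
  have hnab1 : (nabla ^ (1:ℤ)) = nabla := zpow_one nabla
  have hnz : ∀ (p : Polynomial ℂ) (v : (Fin n → Polynomial ℂ) ⧸ W), p • v = 0 → p = 0 ∨ v = 0 := by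
    refine aux_torsion_free (⇑fQ) hfQadd (fun p v => ?_) ⟨hfQinj, hfQsurj⟩
    rw [hfQsm, hnab1]
  haveI : NoZeroSMulDivisors (Polynomial ℂ) ((Fin n → Polynomial ℂ) ⧸ W) :=
    ⟨fun {c x} hc => hnz c x hc⟩
  haveI : Module.Free (Polynomial ℂ) ((Fin n → Polynomial ℂ) ⧸ W) :=
    Module.free_of_finite_type_torsion_free'
  set ι := Module.Free.ChooseBasisIndex (Polynomial ℂ) ((Fin n → Polynomial ℂ) ⧸ W) with hι
  let bQ := Module.Free.chooseBasis (Polynomial ℂ) ((Fin n → Polynomial ℂ) ⧸ W)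
  obtain ⟨s, hs⟩ := Module.projective_lifting_property W.mkQ LinearMap.id
    (Submodule.Quotient.mk_surjective W)
  have hsq : ∀ q, W.mkQ (s q) = q := fun q => LinearMap.ext_iff.mp hs q
  have hmkW : ∀ x : Fin n → Polynomial ℂ, x ∈ W → W.mkQ x = 0 := by
    intro x hx
    rw [Submodule.mkQ_apply]
    exact (Submodule.Quotient.mk_eq_zero W).mpr hx
  let F := ψ.coprod s
  have hFinj : Function.Injective F := by
    intro x y hxy
    have h1 : ψ x.1 + s x.2 = ψ y.1 + s y.2 := hxy
    have h2 : x.2 = y.2 := by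
      have := congrArg W.mkQ h1
      rwa [map_add, map_add, hmkW _ ⟨x.1, rfl⟩, hmkW _ ⟨y.1, rfl⟩, zero_add, zero_add,
        hsq, hsq] at this
    have h3 : ψ x.1 = ψ y.1 := by
      rw [h2] at h1
      exact add_right_cancel h1
    exact Prod.ext (hinj h3) h2
  have hFsurj : Function.Surjective F := by
    intro v
    have hmem : v - s (W.mkQ v) ∈ W := by
      rw [← Submodule.Quotient.mk_eq_zero W, ← Submodule.mkQ_apply, map_sub, hsq, sub_self]
    obtain ⟨a, ha⟩ := hmem
    refine ⟨(a, W.mkQ v), ?_⟩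
    show ψ a + s (W.mkQ v) = v
    rw [ha, sub_add_cancel]
  let eF := LinearEquiv.ofBijective F ⟨hFinj, hFsurj⟩
  let bb : Module.Basis (Fin k ⊕ ι) (Polynomial ℂ) (Fin n → Polynomial ℂ) :=
    ((Pi.basisFun (Polynomial ℂ) (Fin k)).prod bQ).map eF
  have hcards := mk_eq_mk_of_basis bb (Pi.basisFun (Polynomial ℂ) (Fin n))
  have hkn : k + Fintype.card ι = n := by
    rw [Cardinal.mk_fintype, Cardinal.mk_fintype] at hcards
    simp only [Cardinal.lift_natCast, Nat.cast_inj] at hcards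
    simpa [Fintype.card_sum] using hcards
  let e : ι ≃ Fin (n - k) := Fintype.equivFinOfCardEq (by omega)
  let b := bQ.reindex e
  refine ⟨⟨hp'inj, hp'surj⟩, ⟨fun i => b i, ?_⟩, ?_⟩
  · intro v
    refine ⟨fun i => b.repr v i, (b.sum_repr v).symm, ?_⟩
    intro c hc
    have h2 := b.repr_sum_self c
    rw [← hc] at h2
    funext i
    rw [← h2]
  · refine ⟨⇑gQ, ⇑fQ, hgQ, hfQ, ⟨⟨?_, ?_⟩, ⟨?_, ?_⟩, ?_, ?_⟩, ⟨hfQinj, hfQsurj⟩⟩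
    · exact fun a b => map_add gQ a b
    · intro p q
      rw [LinearMap.map_smulₛₗ]; rfl
    · exact hfQadd
    · exact hfQsm
    · intro q
      obtain ⟨v, rfl⟩ := hmk q
      rw [hfQ, hgQ, hmp, Submodule.Quotient.mk_smul]
    · intro q
      obtain ⟨v, rfl⟩ := hmk q
      rw [hgQ, hfQ, hpm, Submodule.Quotient.mk_smul]
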